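/- If f : [a,b] ⊆ (0,∞) → ℝ is p-convex with p ≠ 0 and integrable on [a,b], then f(((a^p + b^p)/2)^(1/p)) ≤ (p/(b^p - a^p)) ∫_a^b f(x)·x^(p-1) dx ≤ (f(a) + f(b))/2. -/

import Mathlib

noncomputable section
open Real Set MeasureTheory intervalIntegral

/-- `f` is p-convex on `[a,b]`. -/
def PConvexOn (p a b : ℝ) (f : ℝ → ℝ) : Prop :=
  ∀ x ∈ Set.Icc a b, ∀ y ∈ Set.Icc a b, ∀ t ∈ Set.Icc (0:ℝ) 1,
    f ((t * x ^ p + (1 - t) * y ^ p) ^ (1/p)) ≤ t * f x + (1 - t) * f y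

/-- The p-symmetrical transform of `f` on `[a,b]`. -/
def PSym (p a b : ℝ) (f : ℝ → ℝ) : ℝ → ℝ :=
  fun x => (f x + f ((a ^ p + b ^ p - x ^ p) ^ (1/p))) / 2

lemma aux_rpow_mem_Icc {p a b x : ℝ} (hp : p ≠ 0) (ha : 0 < a) (hab : a ≤ b) (hx : 0 < x) :
    x ∈ Icc a b ↔ x ^ p ∈ Icc (min (a ^ p) (b ^ p)) (max (a ^ p) (b ^ p)) := by
  have hb : 0 < b := lt_of_lt_of_le ha hab
  rcases hp.lt_or_gt with hneg | hpos
  · have h1 : b ^ p ≤ a ^ p := Real.rpow_le_rpow_of_nonpos ha hab hneg.le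
    rw [min_eq_right h1, max_eq_left h1]
    simp only [mem_Icc]
    rw [Real.rpow_le_rpow_iff_of_neg hb hx hneg, Real.rpow_le_rpow_iff_of_neg hx ha hneg]
    tauto
  · have h1 : a ^ p ≤ b ^ p := Real.rpow_le_rpow ha.le hab hpos.le
    rw [min_eq_left h1, max_eq_right h1]
    simp only [mem_Icc]
    rw [Real.rpow_le_rpow_iff ha.le hx.le hpos, Real.rpow_le_rpow_iff hx.le hb.le hpos]

lemma aux_rpow_mem_Ioo {p a b x : ℝ} (hp : p ≠ 0) (ha : 0 < a) (hab : a ≤ b) (hx : 0 < x) :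
    x ∈ Ioo a b ↔ x ^ p ∈ Ioo (min (a ^ p) (b ^ p)) (max (a ^ p) (b ^ p)) := by
  have hb : 0 < b := lt_of_lt_of_le ha hab
  rcases hp.lt_or_gt with hneg | hpos
  · have h1 : b ^ p ≤ a ^ p := Real.rpow_le_rpow_of_nonpos ha hab hneg.le
    rw [min_eq_right h1, max_eq_left h1]
    simp only [mem_Ioo]
    rw [Real.rpow_lt_rpow_iff_of_neg hb hx hneg, Real.rpow_lt_rpow_iff_of_neg hx ha hneg]
    tauto
  · have h1 : a ^ p ≤ b ^ p := Real.rpow_le_rpow ha.le hab hpos.le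
    rw [min_eq_left h1, max_eq_right h1]
    simp only [mem_Ioo]
    rw [Real.rpow_lt_rpow_iff ha.le hx.le hpos, Real.rpow_lt_rpow_iff hx.le hb.le hpos]

theorem hermite_hadamard_pconvex (p a b : ℝ) (hp : p ≠ 0) (ha : 0 < a)
    (hab : a < b) (f : ℝ → ℝ) (hf : PConvexOn p a b f)
    (hint : IntervalIntegrable (fun x => f x * x ^ (p - 1)) volume a b) :
    f (((a ^ p + b ^ p) / 2) ^ (1/p)) ≤
        (p / (b ^ p - a ^ p)) * ∫ x in a..b, f x * x ^ (p - 1) ∧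
    (p / (b ^ p - a ^ p)) * ∫ x in a..b, f x * x ^ (p - 1) ≤ (f a + f b) / 2 := by
  have hb : 0 < b := ha.trans hab
  have hap : 0 < a ^ p := Real.rpow_pos_of_pos ha p
  have hbp : 0 < b ^ p := Real.rpow_pos_of_pos hb p
  set mn : ℝ := min (a ^ p) (b ^ p) with hmn_def
  set mx : ℝ := max (a ^ p) (b ^ p) with hmx_def
  have hmn : 0 < mn := lt_min hap hbp
  have hsum : mn + mx = a ^ p + b ^ p := min_add_max _ _
  -- D and its sign
  have hD : b ^ p - a ^ p ≠ 0 := by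
    rcases hp.lt_or_gt with hneg | hpos
    · exact sub_ne_zero.2 (ne_of_lt (Real.rpow_lt_rpow_of_neg ha hab hneg))
    · exact sub_ne_zero.2 (ne_of_gt (Real.rpow_lt_rpow ha.le hab hpos))
  have hc : 0 < p / (b ^ p - a ^ p) := by
    rcases hp.lt_or_gt with hneg | hpos
    · exact div_pos_of_neg_of_neg hneg (by simpa using sub_neg.2 (Real.rpow_lt_rpow_of_neg ha hab hneg))
    · exact div_pos hpos (sub_pos.2 (Real.rpow_lt_rpow ha.le hab hpos))
  -- membership facts
  have hx0 : ∀ x ∈ Icc a b, (0:ℝ) < x := fun x hx => ha.trans_le hx.1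
  have hmem : ∀ x ∈ Icc a b, x ^ p ∈ Icc mn mx := fun x hx =>
    (aux_rpow_mem_Icc hp ha hab.le (hx0 x hx)).1 hx
  have hmemo : ∀ x ∈ Ioo a b, x ^ p ∈ Ioo mn mx := fun x hx =>
    (aux_rpow_mem_Ioo hp ha hab.le (ha.trans hx.1)).1 hx
  have hAsub : ∀ x ∈ Icc a b, 0 < a ^ p + b ^ p - x ^ p := by
    intro x hx
    have := (hmem x hx).2
    nlinarith [hmn, hsum]
  -- the reflection map
  set φ : ℝ → ℝ := fun x => (a ^ p + b ^ p - x ^ p) ^ (1/p) with hφdef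
  have hφp : ∀ x : ℝ, 0 < a ^ p + b ^ p - x ^ p → (φ x) ^ p = a ^ p + b ^ p - x ^ p := by
    intro x hpos
    show ((a ^ p + b ^ p - x ^ p) ^ (1/p)) ^ p = _
    rw [one_div, Real.rpow_inv_rpow hpos.le hp]
  have hφpos : ∀ x : ℝ, 0 < a ^ p + b ^ p - x ^ p → 0 < φ x := fun x hpos =>
    Real.rpow_pos_of_pos hpos _
  have hφmem : ∀ x ∈ Icc a b, φ x ∈ Icc a b := by
    intro x hx
    have hpos := hAsub x hx
    have h1 := hmem x hx
    rw [aux_rpow_mem_Icc hp ha hab.le (hφpos x hpos), hφp x hpos,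
      ← hmn_def, ← hmx_def, mem_Icc]
    rw [mem_Icc] at h1
    constructor <;> linarith [h1.1, h1.2, hsum]
  have hφmemo : ∀ x ∈ Ioo a b, φ x ∈ Ioo a b := by
    intro x hx
    have hpos := hAsub x (Ioo_subset_Icc_self hx)
    have h1 := hmemo x hx
    rw [aux_rpow_mem_Ioo hp ha hab.le (hφpos x hpos), hφp x hpos,
      ← hmn_def, ← hmx_def, mem_Ioo]
    rw [mem_Ioo] at h1
    constructor <;> linarith [h1.1, h1.2, hsum]
  have hφφ : ∀ x ∈ Icc a b, φ (φ x) = x := by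
    intro x hx
    have hpos := hAsub x hx
    show (a ^ p + b ^ p - (φ x) ^ p) ^ (1/p) = x
    rw [hφp x hpos, show a ^ p + b ^ p - (a ^ p + b ^ p - x ^ p) = x ^ p by ring,
      one_div, Real.rpow_rpow_inv (hx0 x hx).le hp]
  -- basic integrals
  have h0uIcc : (0:ℝ) ∉ Set.uIcc a b := notMem_uIcc_of_lt ha hb
  have hK : (∫ x in a..b, x ^ (p - 1)) = (b ^ p - a ^ p) / p := by
    rw [integral_rpow (Or.inr ⟨by intro h; apply hp; linarith [h], h0uIcc⟩), sub_add_cancel]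
  have hK2 : (∫ x in a..b, x ^ (2 * p - 1)) = ((b ^ p) ^ 2 - (a ^ p) ^ 2) / (2 * p) := by
    rw [integral_rpow (Or.inr ⟨by intro h; apply hp; linarith [h], h0uIcc⟩), sub_add_cancel,
      show (2:ℝ) * p = p * 2 by ring, Real.rpow_mul hb.le, Real.rpow_mul ha.le]
    norm_num
  -- continuity helpers
  have hcont_rpow : ∀ r : ℝ, ContinuousOn (fun x : ℝ => x ^ r) (Icc a b) := by
    intro r x hx
    exact (Real.continuousAt_rpow_const x r (Or.inl (ne_of_gt (hx0 x hx)))).continuousWithinAt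
  have hIoc := (intervalIntegrable_iff_integrableOn_Ioc_of_le hab.le).1 hint
  have hg_int : IntegrableOn (fun u => f u * u ^ (p - 1)) (Ioo a b) volume :=
    hIoc.mono_set Ioo_subset_Ioc_self
  -- derivative of φ
  set ψ : ℝ → ℝ := fun x => -((a ^ p + b ^ p - x ^ p) ^ (1/p - 1) * x ^ (p - 1)) with hψdef
  have hderiv : ∀ x ∈ Ioo a b, HasDerivWithinAt φ (ψ x) (Ioo a b) x := by
    intro x hx
    have hx0' : 0 < x := ha.trans hx.1
    have hpos := hAsub x (Ioo_subset_Icc_self hx)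
    have inner : HasDerivAt (fun y : ℝ => a ^ p + b ^ p - y ^ p) (-(p * x ^ (p - 1))) x :=
      (Real.hasDerivAt_rpow_const (Or.inl hx0'.ne')).const_sub (a ^ p + b ^ p)
    have outer : HasDerivAt (fun u : ℝ => u ^ (1/p))
        (1/p * (a ^ p + b ^ p - x ^ p) ^ (1/p - 1)) (a ^ p + b ^ p - x ^ p) :=
      Real.hasDerivAt_rpow_const (Or.inl hpos.ne')
    have comp : HasDerivAt φ
        (1/p * (a ^ p + b ^ p - x ^ p) ^ (1/p - 1) * -(p * x ^ (p - 1))) x := by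
        have := outer.comp x inner; exact this
    have heq : 1/p * (a ^ p + b ^ p - x ^ p) ^ (1/p - 1) * -(p * x ^ (p - 1))
        = -((a ^ p + b ^ p - x ^ p) ^ (1/p - 1) * x ^ (p - 1)) := by
      field_simp
    exact (heq ▸ comp).hasDerivWithinAt
  have hinj : InjOn φ (Ioo a b) := by
    intro x hx y hy hxy
    have h1 := hφφ x (Ioo_subset_Icc_self hx)
    rw [← h1, hxy, hφφ y (Ioo_subset_Icc_self hy)]
  have himg : φ '' (Ioo a b) = Ioo a b := by
    apply Subset.antisymm
    · rintro y ⟨x, hx, rfl⟩; exact hφmemo x hx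
    · intro y hy; exact ⟨φ y, hφmemo y hy, hφφ y (Ioo_subset_Icc_self hy)⟩
  have hjac : ∀ x ∈ Ioo a b, |ψ x| • (f (φ x) * (φ x) ^ (p - 1)) = f (φ x) * x ^ (p - 1) := by
    intro x hx
    have hx0' : 0 < x := ha.trans hx.1
    have hpos := hAsub x (Ioo_subset_Icc_self hx)
    have habs : |ψ x| = (a ^ p + b ^ p - x ^ p) ^ (1/p - 1) * x ^ (p - 1) := by
      show |-((a ^ p + b ^ p - x ^ p) ^ (1/p - 1) * x ^ (p - 1))| = _
      rw [abs_neg, abs_of_pos (mul_pos (Real.rpow_pos_of_pos hpos _)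
        (Real.rpow_pos_of_pos hx0' _))]
    have hφpow : φ x ^ (p - 1) = (a ^ p + b ^ p - x ^ p) ^ (1/p * (p - 1)) := by
      show ((a ^ p + b ^ p - x ^ p) ^ (1/p)) ^ (p - 1) = _
      exact (Real.rpow_mul hpos.le _ _).symm
    have hkey : (a ^ p + b ^ p - x ^ p) ^ (1/p - 1)
        * (a ^ p + b ^ p - x ^ p) ^ (1/p * (p - 1)) = 1 := by
      rw [← Real.rpow_add hpos, show 1/p - 1 + 1/p * (p - 1) = 0 by field_simp; ring,
        Real.rpow_zero]
    rw [smul_eq_mul, habs, hφpow]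
    linear_combination f (φ x) * x ^ (p - 1) * hkey
  have hCV : (∫ x in Ioo a b, f x * x ^ (p - 1)) = ∫ x in Ioo a b, f (φ x) * x ^ (p - 1) := by
    have h1 := integral_image_eq_integral_abs_deriv_smul measurableSet_Ioo hderiv hinj
      (fun u => f u * u ^ (p - 1))
    rw [himg] at h1
    rw [h1]
    exact setIntegral_congr_fun measurableSet_Ioo (fun x hx => hjac x hx)
  have hrefl_int : IntegrableOn (fun x => f (φ x) * x ^ (p - 1)) (Ioo a b) volume := by
    have h2 := (integrableOn_image_iff_integrableOn_abs_deriv_smul measurableSet_Ioo hderiv hinj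
      (fun u => f u * u ^ (p - 1))).1 (by rw [himg]; exact hg_int)
    exact h2.congr_fun (fun x hx => hjac x hx) measurableSet_Ioo
  -- midpoint pointwise estimate
  have hptL : ∀ x ∈ Icc a b, f (((a ^ p + b ^ p) / 2) ^ (1/p)) ≤ (f x + f (φ x)) / 2 := by
    intro x hx
    have h2 := hf x hx (φ x) (hφmem x hx) (1/2) (by norm_num)
    rw [hφp x (hAsub x hx), show (1/2 : ℝ) * x ^ p + (1 - 1/2) * (a ^ p + b ^ p - x ^ p)
      = (a ^ p + b ^ p) / 2 by ring] at h2
    linarith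
  have hIset : (∫ x in a..b, f x * x ^ (p - 1)) = ∫ x in Ioo a b, f x * x ^ (p - 1) := by
    rw [intervalIntegral.integral_of_le hab.le, integral_Ioc_eq_integral_Ioo]
  have hhalf_int : IntegrableOn
      (fun x => (f x * x ^ (p - 1) + f (φ x) * x ^ (p - 1)) / 2) (Ioo a b) volume :=
    (hg_int.add hrefl_int).div_const 2
  have hconst_int : IntegrableOn
      (fun x : ℝ => f (((a ^ p + b ^ p) / 2) ^ (1/p)) * x ^ (p - 1)) (Ioo a b) volume :=
    ((continuousOn_const.mul (hcont_rpow (p - 1))).integrableOn_Icc).mono_set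
      Ioo_subset_Icc_self
  have hL : f (((a ^ p + b ^ p) / 2) ^ (1/p)) * ((b ^ p - a ^ p) / p)
      ≤ ∫ x in a..b, f x * x ^ (p - 1) := by
    have hmono := setIntegral_mono_on hconst_int hhalf_int measurableSet_Ioo (by
      intro x hx
      have hq : (0:ℝ) < x ^ (p - 1) := Real.rpow_pos_of_pos (ha.trans hx.1) _
      have h3 := mul_le_mul_of_nonneg_right (hptL x (Ioo_subset_Icc_self hx)) hq.le
      nlinarith [h3])
    have hLv : (∫ x in Ioo a b, f (((a ^ p + b ^ p) / 2) ^ (1/p)) * x ^ (p - 1))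
        = f (((a ^ p + b ^ p) / 2) ^ (1/p)) * ((b ^ p - a ^ p) / p) := by
      rw [MeasureTheory.integral_const_mul, ← hK, intervalIntegral.integral_of_le hab.le,
        integral_Ioc_eq_integral_Ioo]
    have hRv : (∫ x in Ioo a b, (f x * x ^ (p - 1) + f (φ x) * x ^ (p - 1)) / 2)
        = ∫ x in Ioo a b, f x * x ^ (p - 1) := by
      rw [MeasureTheory.integral_div, MeasureTheory.integral_add hg_int hrefl_int, ← hCV]
      ring
    rw [hLv, hRv] at hmono
    rw [hIset]
    exact hmono
  have left : f (((a ^ p + b ^ p) / 2) ^ (1/p))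
      ≤ (p / (b ^ p - a ^ p)) * ∫ x in a..b, f x * x ^ (p - 1) := by
    have h4 := mul_le_mul_of_nonneg_left hL hc.le
    rwa [show (p / (b ^ p - a ^ p)) * (f (((a ^ p + b ^ p) / 2) ^ (1/p)) * ((b ^ p - a ^ p) / p))
      = f (((a ^ p + b ^ p) / 2) ^ (1/p)) by field_simp] at h4
  -- right inequality
  have hptR : ∀ x ∈ Icc a b, f x * x ^ (p - 1)
      ≤ ((b ^ p - x ^ p) / (b ^ p - a ^ p) * f a
        + (1 - (b ^ p - x ^ p) / (b ^ p - a ^ p)) * f b) * x ^ (p - 1) := by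
    intro x hx
    have hxm := hmem x hx
    rw [mem_Icc, hmn_def, hmx_def] at hxm
    have ht : (b ^ p - x ^ p) / (b ^ p - a ^ p) ∈ Icc (0:ℝ) 1 := by
      rcases hp.lt_or_gt with hneg | hpos
      · have h1 : b ^ p < a ^ p := Real.rpow_lt_rpow_of_neg ha hab hneg
        have hxm1 : b ^ p ≤ x ^ p := by
          have h6 := hxm.1; rwa [min_eq_right h1.le] at h6
        have hxm2 : x ^ p ≤ a ^ p := by
          have h6 := hxm.2; rwa [max_eq_left h1.le] at h6
        have hDneg : b ^ p - a ^ p < 0 := by linarith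
        constructor
        · rw [div_nonneg_iff]
          right
          exact ⟨by linarith, hDneg.le⟩
        · rw [div_le_one_iff]
          right; right
          exact ⟨hDneg, by linarith⟩
      · have h1 : a ^ p < b ^ p := Real.rpow_lt_rpow ha.le hab hpos
        have hxm1 : a ^ p ≤ x ^ p := by
          have h6 := hxm.1; rwa [min_eq_left h1.le] at h6
        have hxm2 : x ^ p ≤ b ^ p := by
          have h6 := hxm.2; rwa [max_eq_right h1.le] at h6
        constructor
        · exact div_nonneg (by linarith) (by linarith)
        · rw [div_le_one (by linarith)]
          linarith
    have h2 := hf a (left_mem_Icc.2 hab.le) b (right_mem_Icc.2 hab.le) _ ht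
    have h3 : (b ^ p - x ^ p) / (b ^ p - a ^ p) * a ^ p
        + (1 - (b ^ p - x ^ p) / (b ^ p - a ^ p)) * b ^ p = x ^ p := by
      field_simp
      ring
    rw [h3, one_div, Real.rpow_rpow_inv (hx0 x hx).le hp] at h2
    exact mul_le_mul_of_nonneg_right h2 (Real.rpow_pos_of_pos (hx0 x hx) _).le
  have hg1 : IntervalIntegrable (fun x : ℝ => x ^ (p - 1)) volume a b := by
    apply ContinuousOn.intervalIntegrable
    rw [uIcc_of_le hab.le]
    exact hcont_rpow (p - 1)
  have hg2 : IntervalIntegrable (fun x : ℝ => x ^ (2 * p - 1)) volume a b := by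
    apply ContinuousOn.intervalIntegrable
    rw [uIcc_of_le hab.le]
    exact hcont_rpow (2 * p - 1)
  have hMint : IntervalIntegrable (fun x => ((b ^ p - x ^ p) / (b ^ p - a ^ p) * f a
      + (1 - (b ^ p - x ^ p) / (b ^ p - a ^ p)) * f b) * x ^ (p - 1)) volume a b := by
    apply ContinuousOn.intervalIntegrable
    rw [uIcc_of_le hab.le]
    exact ((((continuousOn_const.sub (hcont_rpow p)).div_const _).mul continuousOn_const).add
      ((continuousOn_const.sub ((continuousOn_const.sub (hcont_rpow p)).div_const _)).mul
        continuousOn_const)).mul (hcont_rpow (p - 1))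
  have hmonoR := intervalIntegral.integral_mono_on hab.le hint hMint hptR
  have heqn : EqOn (fun x => ((b ^ p - x ^ p) / (b ^ p - a ^ p) * f a
      + (1 - (b ^ p - x ^ p) / (b ^ p - a ^ p)) * f b) * x ^ (p - 1))
      (fun x => f b * x ^ (p - 1) + (f a - f b) / (b ^ p - a ^ p)
        * (b ^ p * x ^ (p - 1) - x ^ (2 * p - 1))) (Set.uIcc a b) := by
    intro x hx
    rw [uIcc_of_le hab.le] at hx
    have hx0' := hx0 x hx
    dsimp only
    rw [show (2:ℝ) * p - 1 = p + (p - 1) by ring, Real.rpow_add hx0']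
    field_simp
    ring
  have hMval : (∫ x in a..b, ((b ^ p - x ^ p) / (b ^ p - a ^ p) * f a
      + (1 - (b ^ p - x ^ p) / (b ^ p - a ^ p)) * f b) * x ^ (p - 1))
      = f b * ((b ^ p - a ^ p) / p) + (f a - f b) / (b ^ p - a ^ p)
        * (b ^ p * ((b ^ p - a ^ p) / p) - ((b ^ p) ^ 2 - (a ^ p) ^ 2) / (2 * p)) := by
    rw [intervalIntegral.integral_congr heqn,
      intervalIntegral.integral_add (hg1.const_mul _) (((hg1.const_mul _).sub hg2).const_mul _),
      intervalIntegral.integral_const_mul, intervalIntegral.integral_const_mul,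
      intervalIntegral.integral_sub (hg1.const_mul _) hg2,
      intervalIntegral.integral_const_mul, hK, hK2]
  have right : (p / (b ^ p - a ^ p)) * (∫ x in a..b, f x * x ^ (p - 1)) ≤ (f a + f b) / 2 := by
    have h5 := mul_le_mul_of_nonneg_left (hmonoR.trans_eq hMval) hc.le
    calc (p / (b ^ p - a ^ p)) * (∫ x in a..b, f x * x ^ (p - 1))
        ≤ (p / (b ^ p - a ^ p)) * (f b * ((b ^ p - a ^ p) / p) + (f a - f b) / (b ^ p - a ^ p)
          * (b ^ p * ((b ^ p - a ^ p) / p) - ((b ^ p) ^ 2 - (a ^ p) ^ 2) / (2 * p))) := h5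
      _ = (f a + f b) / 2 := by field_simp; ring
  exact ⟨left, right⟩
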